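/- Let G be a connected finite graph and let P = {P, P₁, P₂, P₃} be a set of exactly 4 longest paths of G. Then the number of vertices of P that lie on at most 2 of the paths of P (i.e., |X¹_P(P) ∪ X²_P(P)|) is at least t'_P(P)·(f(G,P) − 1). -/

import Mathlib

open SimpleGraph

/-- `w` is a longest path of `G`: it is a path and no path of `G` is longer. -/
def IsLongestPath {V : Type*} (G : SimpleGraph V) {u v : V} (w : G.Walk u v) : Prop :=
  w.IsPath ∧ ∀ (a b : V) (q : G.Walk a b), q.IsPath → q.length ≤ w.length

/-- The distance `d_G(x, V(w))` from a vertex `x` to the vertex set of a walk `w`. -/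
noncomputable def distToWalk {V : Type*} (G : SimpleGraph V) (x : V) {u v : V}
    (w : G.Walk u v) : ℕ :=
  sInf {d : ℕ | ∃ y ∈ w.support, G.dist x y = d}

/-- The path-distance-function `f(G, 𝒫)` of a family `𝒫` of paths of `G`. -/
noncomputable def pdf {V : Type*} (G : SimpleGraph V) {k : ℕ}
    (P : Fin k → Σ u : V, Σ v : V, G.Walk u v) : ℕ :=
  sInf {s : ℕ | ∃ x : V, s = ∑ i, distToWalk G x (P i).2.2}

/-- `Q` is an infix (subpath) of the walk `W`. -/
def IsInfixOf {V : Type*} (G : SimpleGraph V) {a b u v : V} (Q : G.Walk a b)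
    (W : G.Walk u v) : Prop :=
  ∃ (w₁ : G.Walk u a) (w₂ : G.Walk b v), W = (w₁.append Q).append w₂

/-- `Q` is a good path on the member `P i0` of the family `P`: it is a subpath of `P i0`,
its end-vertices lie on two distinct other members `P i` and `P j`, it meets every other
member of the family, and no internal vertex of `Q` lies on `P i` or `P j`. -/
def IsGoodPath {V : Type*} (G : SimpleGraph V) {k : ℕ}
    (P : Fin k → Σ u : V, Σ v : V, G.Walk u v) (i0 : Fin k) {a b : V}
    (Q : G.Walk a b) : Prop :=
  IsInfixOf G Q (P i0).2.2 ∧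
  ∃ i j : Fin k, i ≠ i0 ∧ j ≠ i0 ∧ i ≠ j ∧
    a ∈ (P i).2.2.support ∧ b ∈ (P j).2.2.support ∧
    (∀ m : Fin k, m ≠ i0 → ∃ x ∈ Q.support, x ∈ (P m).2.2.support) ∧
    (∀ x ∈ Q.support, x ≠ a → x ≠ b →
      x ∉ (P i).2.2.support ∧ x ∉ (P j).2.2.support)

/-- `t'_𝒫(P i0)`: the maximum number of pairwise edge-disjoint good paths on `P i0`. -/
noncomputable def tprime {V : Type*} (G : SimpleGraph V) {k : ℕ}
    (P : Fin k → Σ u : V, Σ v : V, G.Walk u v) (i0 : Fin k) : ℕ :=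
  sSup {n : ℕ | ∃ Qs : Fin n → Σ a : V, Σ b : V, G.Walk a b,
    Function.Injective Qs ∧ (∀ t, IsGoodPath G P i0 (Qs t).2.2) ∧
    Pairwise fun s t => ∀ e ∈ (Qs s).2.2.edges, e ∉ (Qs t).2.2.edges}

/-- The number of members of the family `P` whose vertex set contains `x`. -/
def countOn {V : Type*} [DecidableEq V] (G : SimpleGraph V) {k : ℕ}
    (P : Fin k → Σ u : V, Σ v : V, G.Walk u v) (x : V) : ℕ :=
  (Finset.univ.filter fun i => x ∈ (P i).2.2.support).card

/-- `|X¹ ∪ X² ∪ ... ∪ Xᵐ|` for the path `P i0`: the number of vertices of `P i0`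
lying on at least `1` and at most `m` members of the family `P`. -/
def XUpTo {V : Type*} [DecidableEq V] (G : SimpleGraph V) {k : ℕ}
    (P : Fin k → Σ u : V, Σ v : V, G.Walk u v) (i0 : Fin k) (m : ℕ) : ℕ :=
  ((P i0).2.2.support.toFinset.filter fun x => countOn G P x ∈ Finset.Icc 1 m).card

section Aux

variable {V : Type*} {G : SimpleGraph V}

private lemma aux_support_getElem? {u v : V} (p : G.Walk u v) :
    ∀ i ≤ p.length, p.support[i]? = some (p.getVert i) := by
  induction p with
  | nil =>
    intro i hi
    simp only [Walk.length_nil, Nat.le_zero] at hi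
    subst hi
    simp
  | cons h q ih =>
    intro i hi
    cases i with
    | zero => simp
    | succ n =>
      have := ih n (by simpa using hi)
      simpa [Walk.support_cons] using this

private lemma aux_getVert_injOn {u v : V} {p : G.Walk u v} (hp : p.IsPath) {i j : ℕ}
    (hi : i ≤ p.length) (hj : j ≤ p.length) (h : p.getVert i = p.getVert j) : i = j := by
  have h1 := aux_support_getElem? p i hi
  have h2 := aux_support_getElem? p j hj
  refine (List.getElem?_inj (l := p.support) ?_ hp.support_nodup).mp ?_
  · rw [Walk.length_support]; omega
  · rw [h1, h2, h]

private lemma aux_edge_getVert_mem {u v : V} (p : G.Walk u v) :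
    ∀ i < p.length, s(p.getVert i, p.getVert (i + 1)) ∈ p.edges := by
  induction p with
  | nil => simp
  | cons h q ih =>
    intro i hi
    cases i with
    | zero =>
      simp [Walk.getVert_zero, Walk.getVert_cons_succ]
    | succ n =>
      have := ih n (by simpa using hi)
      simp only [Walk.getVert_cons_succ, Walk.edges_cons, List.mem_cons]
      exact Or.inr this

private lemma aux_infix_getVert {a b u v : V} {Q : G.Walk a b} {W : G.Walk u v}
    (w1 : G.Walk u a) (w2 : G.Walk b v) (hW : W = (w1.append Q).append w2)
    {t : ℕ} (ht : t ≤ Q.length) :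
    W.getVert (w1.length + t) = Q.getVert t := by
  subst hW
  rw [Walk.getVert_append, Walk.getVert_append, Walk.length_append]
  rcases lt_or_eq_of_le ht with h | h
  · rw [if_pos (by omega), if_neg (by omega)]
    congr 1
    omega
  · subst h
    rw [if_neg (by omega)]
    have h0 : w1.length + Q.length - (w1.length + Q.length) = 0 := by omega
    rw [h0, Walk.getVert_zero, Walk.getVert_length]

private lemma aux_infix_support_subset {a b u v : V} {Q : G.Walk a b} {W : G.Walk u v}
    (h : IsInfixOf G Q W) : ∀ x ∈ Q.support, x ∈ W.support := by
  obtain ⟨w1, w2, hW⟩ := h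
  intro x hx
  obtain ⟨t, htx, ht⟩ := Walk.mem_support_iff_exists_getVert.mp hx
  refine Walk.mem_support_iff_exists_getVert.mpr ⟨w1.length + t, ?_, ?_⟩
  · rw [aux_infix_getVert w1 w2 hW ht, htx]
  · rw [hW]
    simp only [Walk.length_append]
    omega

private lemma aux_distToWalk_le {x y u v : V} (w : G.Walk u v) (hy : y ∈ w.support) :
    distToWalk G x w ≤ G.dist x y :=
  Nat.sInf_le ⟨y, hy, rfl⟩

private lemma aux_distToWalk_eq_zero {x u v : V} (w : G.Walk u v) (hx : x ∈ w.support) :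
    distToWalk G x w = 0 :=
  Nat.le_zero.mp (by simpa [SimpleGraph.dist_self] using aux_distToWalk_le (x := x) w hx)

private lemma fin4_exists : ∀ i0 i j : Fin 4, i ≠ i0 → j ≠ i0 → i ≠ j →
    ∃ m : Fin 4, m ≠ i0 ∧ m ≠ i ∧ m ≠ j := by decide

private lemma fin4_cases : ∀ i0 i j m4 m' : Fin 4, i ≠ i0 → j ≠ i0 → i ≠ j →
    m4 ≠ i0 → m4 ≠ i → m4 ≠ j → m' ≠ i → m' ≠ j → m' = i0 ∨ m' = m4 := by decide

end Aux

private lemma aux_core {V : Type*} [Fintype V] [DecidableEq V] {G : SimpleGraph V}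
    (P : Fin 4 → Σ u : V, Σ v : V, G.Walk u v) (i0 : Fin 4)
    (hpath : ((P i0).2.2).IsPath)
    {n : ℕ} (Qs : Fin n → Σ a : V, Σ b : V, G.Walk a b)
    (hgood : ∀ t, IsGoodPath G P i0 (Qs t).2.2)
    (hdisj : Pairwise fun s t => ∀ e ∈ (Qs s).2.2.edges, e ∉ (Qs t).2.2.edges) :
    n * (pdf G P - 1) ≤ XUpTo G P i0 2 := by
  set F : Fin n → Finset V :=
    fun s => (Qs s).2.2.support.toFinset \ {(Qs s).1, (Qs s).2.1} with hF
  -- each F s lands in the set defining XUpTo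
  have hT : ∀ s, F s ⊆ ((P i0).2.2.support.toFinset.filter
      fun x => countOn G P x ∈ Finset.Icc 1 2) := by
    intro s x hx
    simp only [hF, Finset.mem_sdiff, List.mem_toFinset, Finset.mem_insert,
      Finset.mem_singleton, not_or] at hx
    obtain ⟨hxsup, hxa, hxb⟩ := hx
    obtain ⟨hinf, i, j, hii0, hji0, hij, ha, hb, h8, h9⟩ := hgood s
    have hxW : x ∈ (P i0).2.2.support := aux_infix_support_subset hinf x hxsup
    have hnotij := h9 x hxsup hxa hxb
    refine Finset.mem_filter.mpr ⟨List.mem_toFinset.mpr hxW, ?_⟩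
    rw [Finset.mem_Icc]
    constructor
    · exact Finset.card_pos.mpr ⟨i0, Finset.mem_filter.mpr ⟨Finset.mem_univ _, hxW⟩⟩
    · have hsub : (Finset.univ.filter fun m => x ∈ (P m).2.2.support) ⊆
          Finset.univ \ {i, j} := by
        intro m hm
        simp only [Finset.mem_filter] at hm
        simp only [Finset.mem_sdiff, Finset.mem_univ, true_and, Finset.mem_insert,
          Finset.mem_singleton, not_or]
        exact ⟨fun h => hnotij.1 (h ▸ hm.2), fun h => hnotij.2 (h ▸ hm.2)⟩
      calc countOn G P x ≤ (Finset.univ \ ({i, j} : Finset (Fin 4))).card :=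
            Finset.card_le_card hsub
        _ = 2 := by
            rw [Finset.card_sdiff_of_subset (Finset.subset_univ _), Finset.card_pair hij]
            simp
  -- pdf is at most the length of each good path
  have hlen : ∀ s, pdf G P ≤ (Qs s).2.2.length := by
    intro s
    obtain ⟨hinf, i, j, hii0, hji0, hij, ha, hb, h8, h9⟩ := hgood s
    obtain ⟨m4, hm0, hmi, hmj⟩ := fin4_exists i0 i j hii0 hji0 hij
    obtain ⟨x₀, hx₀Q, hx₀m⟩ := h8 m4 hm0
    have hda : G.dist x₀ (Qs s).1 ≤ ((Qs s).2.2.takeUntil x₀ hx₀Q).length := by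
      rw [SimpleGraph.dist_comm]
      exact SimpleGraph.dist_le _
    have hdb : G.dist x₀ (Qs s).2.1 ≤ ((Qs s).2.2.dropUntil x₀ hx₀Q).length :=
      SimpleGraph.dist_le _
    have hsplit : ((Qs s).2.2.takeUntil x₀ hx₀Q).length +
        ((Qs s).2.2.dropUntil x₀ hx₀Q).length = (Qs s).2.2.length := by
      rw [← Walk.length_append, Walk.take_spec]
    have hx₀W : x₀ ∈ (P i0).2.2.support := aux_infix_support_subset hinf x₀ hx₀Q
    have key : ∀ m' : Fin 4, distToWalk G x₀ (P m').2.2 ≤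
        (if m' = i then G.dist x₀ (Qs s).1 else 0) +
        (if m' = j then G.dist x₀ (Qs s).2.1 else 0) := by
      intro m'
      by_cases h1 : m' = i
      · subst h1
        rw [if_pos rfl, if_neg hij]
        simpa using aux_distToWalk_le (x := x₀) _ ha
      · by_cases h2 : m' = j
        · subst h2
          rw [if_neg h1, if_pos rfl]
          simpa using aux_distToWalk_le (x := x₀) _ hb
        · rw [if_neg h1, if_neg h2]
          rcases fin4_cases i0 i j m4 m' hii0 hji0 hij hm0 hmi hmj h1 h2 with rfl | rfl
          · simp [aux_distToWalk_eq_zero _ hx₀W]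
          · simp [aux_distToWalk_eq_zero _ hx₀m]
    have hpdf : pdf G P ≤ ∑ m', distToWalk G x₀ (P m').2.2 := Nat.sInf_le ⟨x₀, rfl⟩
    have hsum : ∑ m' : Fin 4, ((if m' = i then G.dist x₀ (Qs s).1 else 0) +
        (if m' = j then G.dist x₀ (Qs s).2.1 else 0)) =
        G.dist x₀ (Qs s).1 + G.dist x₀ (Qs s).2.1 := by
      rw [Finset.sum_add_distrib]
      simp
    have hstep : ∑ m', distToWalk G x₀ (P m').2.2 ≤
        G.dist x₀ (Qs s).1 + G.dist x₀ (Qs s).2.1 := by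
      rw [← hsum]
      exact Finset.sum_le_sum fun m' _ => key m'
    omega
  -- each F s has at least pdf - 1 elements
  have hcard : ∀ s, pdf G P - 1 ≤ (F s).card := by
    intro s
    have hQpath : (Qs s).2.2.IsPath := by
      obtain ⟨⟨w1, w2, hW⟩, _⟩ := hgood s
      have hp := hpath
      rw [hW] at hp
      exact hp.of_append_left.of_append_right
    have h1 : (Qs s).2.2.support.toFinset.card = (Qs s).2.2.length + 1 := by
      rw [List.toFinset_card_of_nodup hQpath.support_nodup, Walk.length_support]
    have h2 : ({(Qs s).1, (Qs s).2.1} : Finset V).card ≤ 2 := by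
      apply le_trans (Finset.card_insert_le _ _)
      simp
    have h3 := Finset.le_card_sdiff ({(Qs s).1, (Qs s).2.1} : Finset V)
      ((Qs s).2.2.support.toFinset)
    have h4 := hlen s
    simp only [hF]
    omega
  -- the sets F s are pairwise disjoint
  have hdisjF : ∀ s t : Fin n, s ≠ t → Disjoint (F s) (F t) := by
    intro s t hst
    rw [Finset.disjoint_left]
    intro x hxs hxt
    obtain ⟨⟨w1s, w2s, hWs⟩, _⟩ := hgood s
    obtain ⟨⟨w1t, w2t, hWt⟩, _⟩ := hgood t
    simp only [hF, Finset.mem_sdiff, List.mem_toFinset, Finset.mem_insert,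
      Finset.mem_singleton, not_or] at hxs hxt
    obtain ⟨hxsupS, hxaS, hxbS⟩ := hxs
    obtain ⟨hxsupT, hxaT, hxbT⟩ := hxt
    obtain ⟨ts, hts, htsle⟩ := Walk.mem_support_iff_exists_getVert.mp hxsupS
    obtain ⟨tt, htt, httle⟩ := Walk.mem_support_iff_exists_getVert.mp hxsupT
    have hts0 : ts ≠ 0 := fun h => hxaS (by rw [← hts, h, Walk.getVert_zero])
    have htsL : ts ≠ (Qs s).2.2.length := fun h => hxbS (by rw [← hts, h, Walk.getVert_length])
    have htt0 : tt ≠ 0 := fun h => hxaT (by rw [← htt, h, Walk.getVert_zero])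
    have httL : tt ≠ (Qs t).2.2.length := fun h => hxbT (by rw [← htt, h, Walk.getVert_length])
    have hWlenS : (P i0).2.2.length = w1s.length + (Qs s).2.2.length + w2s.length := by
      rw [hWs]
      simp [Walk.length_append]
    have hWlenT : (P i0).2.2.length = w1t.length + (Qs t).2.2.length + w2t.length := by
      rw [hWt]
      simp [Walk.length_append]
    have hgs : (P i0).2.2.getVert (w1s.length + ts) = x := by
      rw [aux_infix_getVert w1s w2s hWs htsle, hts]
    have hgt : (P i0).2.2.getVert (w1t.length + tt) = x := by
      rw [aux_infix_getVert w1t w2t hWt httle, htt]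
    have heq : w1s.length + ts = w1t.length + tt :=
      aux_getVert_injOn hpath (by omega) (by omega) (by rw [hgs, hgt])
    have hes : s((Qs s).2.2.getVert (ts - 1), (Qs s).2.2.getVert ts) ∈ (Qs s).2.2.edges := by
      have h' := aux_edge_getVert_mem (Qs s).2.2 (ts - 1) (by omega)
      have h'' : ts - 1 + 1 = ts := by omega
      rwa [h''] at h'
    have het : s((Qs t).2.2.getVert (tt - 1), (Qs t).2.2.getVert tt) ∈ (Qs t).2.2.edges := by
      have h' := aux_edge_getVert_mem (Qs t).2.2 (tt - 1) (by omega)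
      have h'' : tt - 1 + 1 = tt := by omega
      rwa [h''] at h'
    have e1 : (Qs s).2.2.getVert (ts - 1) = (P i0).2.2.getVert (w1s.length + ts - 1) := by
      rw [← aux_infix_getVert w1s w2s hWs (t := ts - 1) (by omega)]
      congr 1
      omega
    have e2 : (Qs t).2.2.getVert (tt - 1) = (P i0).2.2.getVert (w1t.length + tt - 1) := by
      rw [← aux_infix_getVert w1t w2t hWt (t := tt - 1) (by omega)]
      congr 1
      omega
    have hedge_eq : s((Qs s).2.2.getVert (ts - 1), (Qs s).2.2.getVert ts) =
        s((Qs t).2.2.getVert (tt - 1), (Qs t).2.2.getVert tt) := by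
      rw [e1, e2, hts, htt]
      have : w1s.length + ts - 1 = w1t.length + tt - 1 := by omega
      rw [this]
    exact hdisj hst _ hes (hedge_eq ▸ het)
  -- put everything together
  have hbi := Finset.card_biUnion (s := (Finset.univ : Finset (Fin n))) (t := F)
    (fun s _ t _ hst => hdisjF s t hst)
  have hsub2 : Finset.univ.biUnion F ⊆ ((P i0).2.2.support.toFinset.filter
      fun x => countOn G P x ∈ Finset.Icc 1 2) :=
    Finset.biUnion_subset.mpr fun s _ => hT s
  calc n * (pdf G P - 1) = ∑ _s : Fin n, (pdf G P - 1) := by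
        rw [Finset.sum_const, Finset.card_univ, Fintype.card_fin, smul_eq_mul]
    _ ≤ ∑ s : Fin n, (F s).card := Finset.sum_le_sum fun s _ => hcard s
    _ = (Finset.univ.biUnion F).card := hbi.symm
    _ ≤ XUpTo G P i0 2 := Finset.card_le_card hsub2

/-- Corollary 7(ii): for four longest paths,
`|X¹_𝒫(P) ∪ X²_𝒫(P)| ≥ t'_𝒫(P)·(f(G,𝒫) - 1)`. -/
theorem cor_X_card_bound_four {V : Type*} [Fintype V] [DecidableEq V] (G : SimpleGraph V)
    (hG : G.Connected) (P : Fin 4 → Σ u : V, Σ v : V, G.Walk u v)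
    (hinj : Function.Injective P) (hlong : ∀ i, IsLongestPath G (P i).2.2)
    (i0 : Fin 4) :
    (tprime G P i0 : ℝ) * ((pdf G P : ℝ) - 1) ≤ (XUpTo G P i0 2 : ℝ) := by
  rcases lt_or_ge (pdf G P) 2 with hf | hf
  · have h1 : (pdf G P : ℝ) ≤ 1 := by exact_mod_cast Nat.lt_succ_iff.mp hf
    have h2 : (0 : ℝ) ≤ (tprime G P i0 : ℝ) := Nat.cast_nonneg _
    have h3 : (0 : ℝ) ≤ (XUpTo G P i0 2 : ℝ) := Nat.cast_nonneg _
    nlinarith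
  · set S := {n : ℕ | ∃ Qs : Fin n → Σ a : V, Σ b : V, G.Walk a b,
      Function.Injective Qs ∧ (∀ t, IsGoodPath G P i0 (Qs t).2.2) ∧
      Pairwise fun s t => ∀ e ∈ (Qs s).2.2.edges, e ∉ (Qs t).2.2.edges} with hS
    have htp : tprime G P i0 = sSup S := rfl
    have hS0 : 0 ∈ S := ⟨fun t => t.elim0, fun t => t.elim0, fun t => t.elim0, fun s => s.elim0⟩
    have hcore : ∀ n ∈ S, n * (pdf G P - 1) ≤ XUpTo G P i0 2 := by
      intro n hn
      obtain ⟨Qs, _, h1, h2⟩ := hn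
      exact aux_core P i0 (hlong i0).1 Qs h1 h2
    have hbdd : BddAbove S := by
      refine ⟨XUpTo G P i0 2, fun n hn => ?_⟩
      have h := hcore n hn
      have h' : n ≤ n * (pdf G P - 1) := Nat.le_mul_of_pos_right n (by omega)
      omega
    have hmem : tprime G P i0 ∈ S := htp ▸ Nat.sSup_mem ⟨0, hS0⟩ hbdd
    have hfin : tprime G P i0 * (pdf G P - 1) ≤ XUpTo G P i0 2 := hcore _ hmem
    have h1' : (1 : ℕ) ≤ pdf G P := by omega
    have hcast : ((pdf G P : ℝ) - 1) = ((pdf G P - 1 : ℕ) : ℝ) := by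
      rw [Nat.cast_sub h1']
      simp
    rw [hcast, ← Nat.cast_mul]
    exact_mod_cast hfin
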